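/- Define d_{n,k} = Σ_{i=2k}^{n} (n-i+1)·C(n-k+1, i-2k). Then for every positive integer k, d_{2k+1,k}/d_{2k,k} ≥ X(2k+1,k), where X(n,k) = (1/2)·(3 + (k-1)/(2n-3k+3) + (k+3)/(n-2k) - (k+2)/(2n-3k)) + √(y(n,k)) / (2(2n-3k+3)(2n-3k)(n-2k)), with y(n,k) = (4n²+(4-12k)n+9k²-5k)(4n⁴+(28-36k)n³+(60-149k+117k²)n²+(36-174k+276k²-162k³)n+81k⁴-171k³+135k²-45k). Equivalently, this base-case inequality reduces to (k³+9k²+30k+32)² - (k+2)(k²+7k+8)(k³+9k²+22k+64) = 16k(k+1)(k+2)(k+5) ≥ 0. -/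

import Mathlib

open Finset

/-- `d n k = Σ_{i=2k}^{n} (n-i+1)·C(n-k+1, i-2k)`. -/
def d (n k : ℕ) : ℕ :=
  ∑ i ∈ Finset.Icc (2 * k) n, (n - i + 1) * Nat.choose (n - k + 1) (i - 2 * k)

/-- `y(n,k)`, as a real polynomial expression. -/
noncomputable def y (n k : ℝ) : ℝ :=
  (4 * n ^ 2 + (4 - 12 * k) * n + 9 * k ^ 2 - 5 * k) *
    (4 * n ^ 4 + (28 - 36 * k) * n ^ 3 + (60 - 149 * k + 117 * k ^ 2) * n ^ 2 +
      (36 - 174 * k + 276 * k ^ 2 - 162 * k ^ 3) * n +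
      81 * k ^ 4 - 171 * k ^ 3 + 135 * k ^ 2 - 45 * k)

/-- `X(n,k)`, the lower bound for the ratio `d_{n,k}/d_{n-1,k}`. -/
noncomputable def Xr (n k : ℝ) : ℝ :=
  (1 / 2) * (3 + (k - 1) / (2 * n - 3 * k + 3) + (k + 3) / (n - 2 * k) -
    (k + 2) / (2 * n - 3 * k)) +
  Real.sqrt (y n k) / (2 * (2 * n - 3 * k + 3) * (2 * n - 3 * k) * (n - 2 * k))

lemma key_stmt10 (x : ℝ) (hx : 1 ≤ x) : Xr (2*x+1) x ≤ x + 4 := by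
  have e1 : 2*(2*x+1) - 3*x + 3 = x + 5 := by ring
  have e2 : (2*x+1) - 2*x = 1 := by ring
  have e3 : 2*(2*x+1) - 3*x = x + 2 := by ring
  unfold Xr
  rw [e1, e2, e3]
  have h5 : (0:ℝ) < x + 5 := by linarith
  have h2 : (0:ℝ) < x + 2 := by linarith
  have hR : (0:ℝ) ≤ (x+2)*(x^2+7*x+16) := by nlinarith
  have hs : Real.sqrt (y (2*x+1) x) ≤ (x+2)*(x^2+7*x+16) := by
    calc Real.sqrt (y (2*x+1) x) ≤ Real.sqrt (((x+2)*(x^2+7*x+16))^2) := by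
          apply Real.sqrt_le_sqrt
          have hprod : (0:ℝ) ≤ x*(x+1)*(x+2)*(x+5) := by positivity
          unfold y; nlinarith [hprod]
      _ = (x+2)*(x^2+7*x+16) := Real.sqrt_sq hR
  have hD : (0:ℝ) < 2*(x+5)*(x+2)*1 := by positivity
  have hfrac : Real.sqrt (y (2*x+1) x) / (2*(x+5)*(x+2)*1)
      ≤ ((x+2)*(x^2+7*x+16)) / (2*(x+5)*(x+2)*1) := by
    exact div_le_div_of_nonneg_right hs hD.le
  have heq : (1/2)*(3 + (x-1)/(x+5) + (x+3)/1 - (x+2)/(x+2))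
      + ((x+2)*(x^2+7*x+16)) / (2*(x+5)*(x+2)*1) = x + 4 := by
    rw [div_self h2.ne']
    field_simp
    ring
  linarith

/-- Base case: `d_{2k+1,k}/d_{2k,k} ≥ X(2k+1,k)` for every positive integer `k`. -/
theorem stmt10 (k : ℕ) (hk : 1 ≤ k) :
    (d (2 * k + 1) k : ℝ) / (d (2 * k) k : ℝ) ≥
      Xr ((2 * k + 1 : ℕ) : ℝ) ((k : ℕ) : ℝ) := by
  have h1 : d (2*k) k = 1 := by simp [d]
  have h2 : d (2*k+1) k = k + 4 := by
    rw [d, Finset.sum_Icc_succ_top (by omega : 2*k ≤ 2*k+1)]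
    simp [Nat.choose]
    omega
  rw [h1, h2]
  have hx : (1:ℝ) ≤ (k:ℝ) := by exact_mod_cast hk
  have := key_stmt10 (k:ℝ) hx
  have hcast : ((2 * k + 1 : ℕ) : ℝ) = 2 * (k:ℝ) + 1 := by push_cast; ring
  rw [hcast]
  push_cast
  rw [div_one]
  linarith
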